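/- Let B be a closed ball of radius √n centered at a point a in R^n, and let A = B ∩ Z^n. Then (1) the point a belongs to the convex hull of A, and (2) the subgroup of Z^n generated by the differences x − y with x, y ∈ A is all of Z^n. -/

import Mathlib

/-- The coercion of an integral point of `ℤ^n` into Euclidean space `ℝ^n`. -/
def intCastEuc {n : ℕ} (x : Fin n → ℤ) : EuclideanSpace ℝ (Fin n) := WithLp.toLp 2 (fun i => (x i : ℝ))

lemma memBall {n : ℕ} (a : EuclideanSpace ℝ (Fin n)) (x : Fin n → ℤ)
    (h : ∀ i, |(x i : ℝ) - a i| ≤ 1) :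
    intCastEuc x ∈ Metric.closedBall a (Real.sqrt n) := by
  rw [Metric.mem_closedBall, EuclideanSpace.dist_eq]
  apply Real.sqrt_le_sqrt
  calc ∑ i, dist (intCastEuc x i) (a i) ^ 2 ≤ ∑ _i : Fin n, (1 : ℝ) := by
        apply Finset.sum_le_sum
        intro i _
        have hd : dist (intCastEuc x i) (a i) ≤ 1 := by
          rw [Real.dist_eq]; exact h i
        calc dist (intCastEuc x i) (a i) ^ 2 ≤ 1 ^ 2 := by
              exact pow_le_pow_left₀ dist_nonneg hd 2
          _ = 1 := one_pow 2
    _ = n := by simp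

/-- let `B` be the closed ball of radius `√n` centered at `a ∈ ℝ^n` and
`A = B ∩ ℤ^n`.  Then (1) `a` lies in the convex hull of `A`, and (2) the subgroup of `ℤ^n`
generated by the differences `x - y`, `x, y ∈ A`, is all of `ℤ^n`. -/
theorem stmt2 {n : ℕ} (a : EuclideanSpace ℝ (Fin n))
    (A : Set (Fin n → ℤ))
    (hA : A = {x : Fin n → ℤ | intCastEuc x ∈ Metric.closedBall a (Real.sqrt n)}) :
    a ∈ convexHull ℝ (intCastEuc '' A) ∧
      AddSubgroup.closure {d : Fin n → ℤ | ∃ x ∈ A, ∃ y ∈ A, d = x - y} = ⊤ := by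
  set f : Fin n → ℤ := fun i => ⌊a i⌋ with hf
  have hfa : ∀ i, (f i : ℝ) ≤ a i := fun i => Int.floor_le (a i)
  have hfa' : ∀ i, a i ≤ (f i : ℝ) + 1 := fun i => le_of_lt (Int.lt_floor_add_one (a i))
  have hmem : ∀ x : Fin n → ℤ, (∀ i, x i = f i ∨ x i = f i + 1) → x ∈ A := by
    intro x hx
    rw [hA]
    refine memBall a x fun i => ?_
    rcases hx i with h | h <;> rw [h] <;> rw [abs_le] <;> push_cast <;>
      constructor <;> nlinarith [hfa i, hfa' i]
  constructor
  · -- convex hull part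
    have hsub : WithLp.toLp 2 '' (Set.univ.pi fun i => ({(f i : ℝ), (f i : ℝ) + 1} : Set ℝ)) ⊆
        intCastEuc '' A := by
      rintro _ ⟨v, hv, rfl⟩
      refine ⟨fun i => if v i = (f i : ℝ) then f i else f i + 1, ?_, ?_⟩
      · apply hmem
        intro i
        by_cases h : v i = (f i : ℝ) <;> simp [h]
      · ext i
        have := hv i (Set.mem_univ i)
        by_cases h : v i = (f i : ℝ)
        · simp [intCastEuc, h]
        · have hv2 : v i = (f i : ℝ) + 1 := by
            rcases this with h1 | h1
            · exact absurd h1 h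
            · exact h1
          simp [intCastEuc, h, hv2]
    refine convexHull_mono hsub ?_
    have : a.ofLp ∈ convexHull ℝ (Set.univ.pi fun i => ({(f i : ℝ), (f i : ℝ) + 1} : Set ℝ)) := by
      apply mem_convexHull_pi
      intro i _
      rw [convexHull_pair, segment_eq_Icc (by linarith [hfa i])]
      exact ⟨hfa i, hfa' i⟩
    have h2 := Set.mem_image_of_mem (WithLp.linearEquiv 2 ℝ (Fin n → ℝ)).symm.toLinearMap this
    rw [LinearMap.image_convexHull] at h2
    exact h2
  · -- subgroup part
    rw [eq_top_iff]
    intro z _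
    have hsingle : ∀ i : Fin n, Pi.single i (1 : ℤ) ∈
        AddSubgroup.closure {d : Fin n → ℤ | ∃ x ∈ A, ∃ y ∈ A, d = x - y} := by
      intro i
      apply AddSubgroup.subset_closure
      refine ⟨f + Pi.single i 1, ?_, f, ?_, by abel⟩
      · apply hmem
        intro j
        by_cases h : j = i
        · subst h; right; simp
        · left; simp [Pi.single_apply, h]
      · exact hmem f fun i => Or.inl rfl
    have hz : z = ∑ i, z i • Pi.single i (1 : ℤ) := by
      funext j
      simp [Pi.single_apply, Finset.sum_apply]
    rw [hz]
    exact AddSubgroup.sum_mem _ fun i _ => AddSubgroup.zsmul_mem _ (hsingle i) _
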